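/- Let C ∈ ℝ and let t : ℝ → ℝ be a function such that (t(w) − (2π/w − C/w³)) = O(1/w⁴) as w → +∞. Suppose δ > 0 and g : (0, δ) → ℝ satisfies t(g(ρ)) = ρ for all ρ ∈ (0, δ) and g(ρ) → +∞ as ρ → 0⁺. Then (g(ρ) − (2π/ρ − Cρ/(4π²))) = O(ρ²) as ρ → 0⁺. -/

import Mathlib

open Real Filter

set_option maxHeartbeats 1000000 in
/-- Asymptotic inversion of the cut-time expansion (equation (2.25) of the paper):
if `t(w) = 2π/w - C/w³ + O(w⁻⁴)` as `w → +∞` and `g` is a right inverse of `t`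
near `0⁺` with `g(ρ) → +∞`, then `g(ρ) = 2π/ρ - Cρ/(4π²) + O(ρ²)` as `ρ → 0⁺`. -/
theorem stmt14 (C : ℝ) (t g : ℝ → ℝ) (δ : ℝ) (hδ : 0 < δ)
    (ht : (fun w : ℝ => t w - (2 * π / w - C / w ^ 3)) =O[atTop] fun w : ℝ => 1 / w ^ 4)
    (hg : ∀ ρ ∈ Set.Ioo (0:ℝ) δ, t (g ρ) = ρ)
    (hg' : Tendsto g (nhdsWithin 0 (Set.Ioi 0)) atTop) :
    (fun ρ : ℝ => g ρ - (2 * π / ρ - C * ρ / (4 * π ^ 2)))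
      =O[nhdsWithin 0 (Set.Ioi 0)] fun ρ : ℝ => ρ ^ 2 := by
  obtain ⟨M, hM⟩ := ht.bound
  set M' : ℝ := max M 0 with hM'def
  have hM'0 : 0 ≤ M' := le_max_right _ _
  have hMM' : M ≤ M' := le_max_left _ _
  obtain ⟨W, hW⟩ := eventually_atTop.mp hM
  set N : ℝ := max W (max 1 (|C| + M')) with hNdef
  have h1N : (1:ℝ) ≤ N := le_trans (le_max_left 1 _) (le_max_right W _)
  have hCN : |C| + M' ≤ N := le_trans (le_max_right 1 _) (le_max_right W _)
  have hWN : W ≤ N := le_max_left _ _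
  have hevN : ∀ᶠ ρ in nhdsWithin 0 (Set.Ioi 0), N ≤ g ρ :=
    hg'.eventually (eventually_ge_atTop N)
  have hevδ : ∀ᶠ ρ in nhdsWithin 0 (Set.Ioi 0), ρ ∈ Set.Ioo 0 δ :=
    Ioo_mem_nhdsGT_of_mem ⟨le_refl 0, hδ⟩
  have hpi3 : (3:ℝ) < π := pi_gt_three
  have hpi4 : π ≤ 4 := pi_le_four
  rw [Asymptotics.isBigO_iff]
  refine ⟨M' + |C| * (M' + |C|), ?_⟩
  filter_upwards [hevN, hevδ] with ρ hNw hρδ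
  obtain ⟨hρ0, hρδ'⟩ := hρδ
  set w : ℝ := g ρ with hwdef
  have hw1 : (1:ℝ) ≤ w := le_trans h1N hNw
  have hw0 : (0:ℝ) < w := lt_of_lt_of_le one_pos hw1
  have hwC : |C| + M' ≤ w := le_trans hCN hNw
  have htw : t w = ρ := hg ρ ⟨hρ0, hρδ'⟩
  -- the basic bound from ht
  have hE : |ρ - (2 * π / w - C / w ^ 3)| ≤ M' / w ^ 4 := by
    have := hW w (le_trans hWN hNw)
    rw [htw] at this
    simp only [Real.norm_eq_abs] at this
    have h4 : (0:ℝ) < w ^ 4 := by positivity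
    calc |ρ - (2 * π / w - C / w ^ 3)| ≤ M * |1 / w ^ 4| := this
      _ = M * (1 / w ^ 4) := by rw [abs_of_pos (by positivity)]
      _ ≤ M' * (1 / w ^ 4) := by
          exact mul_le_mul_of_nonneg_right hMM' (by positivity)
      _ = M' / w ^ 4 := by ring
  -- u and its bound
  set u : ℝ := (ρ - (2 * π / w - C / w ^ 3)) * w ^ 4 with hudef
  have hu : |u| ≤ M' := by
    rw [hudef, abs_mul, abs_of_pos (by positivity : (0:ℝ) < w ^ 4)]
    calc |ρ - (2 * π / w - C / w ^ 3)| * w ^ 4 ≤ (M' / w ^ 4) * w ^ 4 :=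
          mul_le_mul_of_nonneg_right hE (by positivity)
      _ = M' := by field_simp
  -- ρ*w - 2π in terms of u
  have hrw2pi : ρ * w - 2 * π = u / w ^ 3 - C / w ^ 2 := by
    rw [hudef]; field_simp; ring
  have hrw2pi_abs : |ρ * w - 2 * π| ≤ (M' + |C|) / w ^ 2 := by
    rw [hrw2pi]
    calc |u / w ^ 3 - C / w ^ 2| ≤ |u / w ^ 3| + |C / w ^ 2| := abs_sub _ _
      _ = |u| / w ^ 3 + |C| / w ^ 2 := by
          rw [abs_div, abs_div, abs_of_pos (by positivity : (0:ℝ) < w ^ 3),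
            abs_of_pos (by positivity : (0:ℝ) < w ^ 2)]
      _ ≤ M' / w ^ 2 + |C| / w ^ 2 := by
          have hu3 : |u| / w ^ 3 ≤ M' / w ^ 2 := by
            calc |u| / w ^ 3 ≤ M' / w ^ 3 := by gcongr
              _ ≤ M' / w ^ 2 := by
                  apply div_le_div_of_nonneg_left hM'0 (by positivity : (0:ℝ) < w ^ 2)
                  nlinarith
          exact add_le_add hu3 le_rfl
      _ = (M' + |C|) / w ^ 2 := by ring
  have hrw2pi_one : |ρ * w - 2 * π| ≤ 1 := by
    refine le_trans hrw2pi_abs ?_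
    rw [div_le_one (by positivity)]
    nlinarith [abs_nonneg C]
  have hrw_lb : 5 ≤ ρ * w := by
    have := abs_le.mp hrw2pi_one
    nlinarith [this.1]
  have hrw_ub : ρ * w ≤ 9 := by
    have := abs_le.mp hrw2pi_one
    nlinarith [this.2]
  -- the key identity
  have hid : (w - (2 * π / ρ - C * ρ / (4 * π ^ 2))) * (4 * π ^ 2 * ρ * w ^ 3)
      = 4 * π ^ 2 * u + C * w * ((ρ * w - 2 * π) * (ρ * w + 2 * π)) := by
    rw [hudef]
    field_simp
    ring
  -- bound the RHS of the identity
  have hbound : |4 * π ^ 2 * u + C * w * ((ρ * w - 2 * π) * (ρ * w + 2 * π))|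
      ≤ 64 * M' + 17 * (|C| * (M' + |C|)) := by
    have hpisq16 : π ^ 2 ≤ 16 := by nlinarith
    have h1 : |4 * π ^ 2 * u| ≤ 64 * M' := by
      rw [abs_mul, abs_of_pos (by positivity : (0:ℝ) < 4 * π ^ 2)]
      nlinarith [mul_le_mul hpisq16 hu (abs_nonneg u) (by norm_num : (0:ℝ) ≤ 16)]
    have h2 : |C * w * ((ρ * w - 2 * π) * (ρ * w + 2 * π))| ≤ 17 * (|C| * (M' + |C|)) := by
      rw [abs_mul, abs_mul, abs_mul, abs_of_pos hw0]
      have hplus : |ρ * w + 2 * π| ≤ 17 := by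
        rw [abs_of_pos (by nlinarith)]
        nlinarith
      have hmw : |ρ * w - 2 * π| * |ρ * w + 2 * π| ≤ ((M' + |C|) / w ^ 2) * 17 :=
        mul_le_mul hrw2pi_abs hplus (abs_nonneg _)
          (le_trans (abs_nonneg _) hrw2pi_abs)
      calc |C| * w * (|ρ * w - 2 * π| * |ρ * w + 2 * π|)
          ≤ |C| * w * (((M' + |C|) / w ^ 2) * 17) := by
            exact mul_le_mul_of_nonneg_left hmw (by positivity)
        _ = 17 * (|C| * (M' + |C|)) * (1 / w) := by field_simp
        _ ≤ 17 * (|C| * (M' + |C|)) * 1 := by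
            apply mul_le_mul_of_nonneg_left _ (by positivity)
            rw [div_le_one hw0]; exact hw1
        _ = 17 * (|C| * (M' + |C|)) := by ring
    calc |4 * π ^ 2 * u + C * w * ((ρ * w - 2 * π) * (ρ * w + 2 * π))|
        ≤ |4 * π ^ 2 * u| + |C * w * ((ρ * w - 2 * π) * (ρ * w + 2 * π))| := abs_add_le _ _
      _ ≤ 64 * M' + 17 * (|C| * (M' + |C|)) := add_le_add h1 h2
  -- conclude
  have hK : (0:ℝ) < 4 * π ^ 2 * ρ * w ^ 3 := by positivity
  have h25 : 25 ≤ (ρ * w) ^ 2 := by nlinarith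
  have h125 : 125 ≤ (ρ * w) ^ 3 := by nlinarith [h25, hrw_lb]
  have hpisq9 : 9 ≤ π ^ 2 := by nlinarith
  have hP : 4500 ≤ 4 * π ^ 2 * (ρ * w) ^ 3 := by
    nlinarith [mul_le_mul hpisq9 h125 (by norm_num : (0:ℝ) ≤ 125) (by positivity : (0:ℝ) ≤ π ^ 2)]
  have hfin : |w - (2 * π / ρ - C * ρ / (4 * π ^ 2))| * (4 * π ^ 2 * ρ * w ^ 3)
      ≤ ((M' + |C| * (M' + |C|)) * ρ ^ 2) * (4 * π ^ 2 * ρ * w ^ 3) := by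
    calc |w - (2 * π / ρ - C * ρ / (4 * π ^ 2))| * (4 * π ^ 2 * ρ * w ^ 3)
        = |(w - (2 * π / ρ - C * ρ / (4 * π ^ 2))) * (4 * π ^ 2 * ρ * w ^ 3)| := by
          rw [abs_mul, abs_of_pos hK]
      _ = |4 * π ^ 2 * u + C * w * ((ρ * w - 2 * π) * (ρ * w + 2 * π))| := by rw [hid]
      _ ≤ 64 * M' + 17 * (|C| * (M' + |C|)) := hbound
      _ ≤ ((M' + |C| * (M' + |C|)) * ρ ^ 2) * (4 * π ^ 2 * ρ * w ^ 3) := by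
          have hq : ((M' + |C| * (M' + |C|)) * ρ ^ 2) * (4 * π ^ 2 * ρ * w ^ 3)
              = (M' + |C| * (M' + |C|)) * (4 * π ^ 2 * (ρ * w) ^ 3) := by ring
          rw [hq]
          have hc0 : 0 ≤ M' + |C| * (M' + |C|) := by positivity
          have hc2 : 0 ≤ |C| * (M' + |C|) := by positivity
          nlinarith [mul_le_mul_of_nonneg_left hP hc0, hM'0, hc2]
  have hD : |w - (2 * π / ρ - C * ρ / (4 * π ^ 2))| ≤ (M' + |C| * (M' + |C|)) * ρ ^ 2 :=
    le_of_mul_le_mul_right hfin hK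
  simpa [Real.norm_eq_abs, abs_of_pos hρ0, abs_of_pos (pow_pos hρ0 2)] using hD
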